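/- There exists an injective primitive recursive function f : ℕ → ℕ such that: every orbit of f is finite; for every n : ℕ only finitely many orbits of f have cardinality n; f is computably categorical, i.e., for every injective computable function g : ℕ → ℕ such that (ℕ, g) is isomorphic to (ℕ, f), there exists a computable bijection h : ℕ → ℕ with h ∘ f = g ∘ h; and f is not punctually categorical, i.e., there exists an injective primitive recursive function g : ℕ → ℕ with (ℕ, g) isomorphic to (ℕ, f) such that there is no bijection h : ℕ → ℕ with h ∘ f = g ∘ h for which both h and h⁻¹ are primitive recursive. -/

import Mathlib

/-- The orbit of `a` under `f`. -/
def Orbit (f : ℕ → ℕ) (a : ℕ) : Set ℕ := {b : ℕ | ∃ m n : ℕ, f^[m] a = f^[n] b}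

namespace PJS

/-- `inv Q x` = the index of the block containing `x`. -/
def inv (Q : ℕ → ℕ) : ℕ → ℕ := fun x =>
  Nat.rec 0 (fun m ih => if Q (ih + 1) ≤ m + 1 then ih + 1 else ih) x

/-- the block permutation determined by block boundaries `Q`. -/
def bf (Q : ℕ → ℕ) (x : ℕ) : ℕ :=
  if x + 1 = Q (inv Q x + 1) then Q (inv Q x) else x + 1

variable {Q : ℕ → ℕ}

theorem inv_zero : inv Q 0 = 0 := rfl

theorem inv_succ (x : ℕ) :
    inv Q (x + 1) = if Q (inv Q x + 1) ≤ x + 1 then inv Q x + 1 else inv Q x := rfl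

section

variable (hQ0 : Q 0 = 0) (hQs : ∀ j, Q j < Q (j + 1))

include hQ0 hQs

theorem inv_spec (x : ℕ) : Q (inv Q x) ≤ x ∧ x < Q (inv Q x + 1) := by
  induction x with
  | zero =>
    constructor
    · rw [inv_zero, hQ0]
    · rw [inv_zero]; have := hQs 0; omega
  | succ x ih =>
    rw [inv_succ]
    by_cases h : Q (inv Q x + 1) ≤ x + 1
    · rw [if_pos h]
      refine ⟨h, ?_⟩
      have := hQs (inv Q x + 1)
      omega
    · rw [if_neg h]
      omega

theorem inv_unique {x j : ℕ} (h1 : Q j ≤ x) (h2 : x < Q (j + 1)) : inv Q x = j := by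
  have hs : StrictMono Q := strictMono_nat_of_lt_succ hQs
  have hspec := inv_spec hQ0 hQs x
  rcases lt_trichotomy (inv Q x) j with h | h | h
  · have : Q (inv Q x + 1) ≤ Q j := hs.le_iff_le.2 (by omega)
    omega
  · exact h
  · have : Q (j + 1) ≤ Q (inv Q x) := hs.le_iff_le.2 (by omega)
    omega

omit hQ0 in
theorem d_pos (j : ℕ) : 0 < Q (j + 1) - Q j := by have := hQs j; omega

theorem inv_block {j r : ℕ} (hr : r < Q (j + 1) - Q j) : inv Q (Q j + r) = j :=
  inv_unique hQ0 hQs (by omega) (by omega)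

theorem bf_block {j r : ℕ} (hr : r < Q (j + 1) - Q j) :
    bf Q (Q j + r) = Q j + (r + 1) % (Q (j + 1) - Q j) := by
  have hd := d_pos hQs j
  unfold bf
  rw [inv_block hQ0 hQs hr]
  by_cases h : r + 1 = Q (j + 1) - Q j
  · rw [if_pos (by omega), h, Nat.mod_self]; omega
  · rw [if_neg (by omega), Nat.mod_eq_of_lt (by omega)]; omega

theorem bf_iter {j r : ℕ} (hr : r < Q (j + 1) - Q j) (m : ℕ) :
    (bf Q)^[m] (Q j + r) = Q j + (r + m) % (Q (j + 1) - Q j) := by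
  have hd := d_pos hQs j
  induction m with
  | zero => simp [Nat.mod_eq_of_lt hr]
  | succ m ih =>
    rw [Function.iterate_succ_apply', ih,
      bf_block hQ0 hQs (Nat.mod_lt _ hd), Nat.mod_add_mod]
    ring_nf

/-- decomposition of an arbitrary point. -/
theorem decomp (x : ℕ) : x = Q (inv Q x) + (x - Q (inv Q x)) ∧
    x - Q (inv Q x) < Q (inv Q x + 1) - Q (inv Q x) := by
  have := inv_spec hQ0 hQs x
  omega

theorem bf_injective : Function.Injective (bf Q) := by
  intro x y hxy
  obtain ⟨hx, hx'⟩ := decomp hQ0 hQs x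
  obtain ⟨hy, hy'⟩ := decomp hQ0 hQs y
  set j := inv Q x with hj
  set j' := inv Q y with hj'
  rw [hx, bf_block hQ0 hQs hx'] at hxy
  rw [hy, bf_block hQ0 hQs hy'] at hxy
  have hdj := d_pos hQs j
  have hdj' := d_pos hQs j'
  have hjj' : j = j' := by
    have h1 : inv Q (Q j + (x - Q j + 1) % (Q (j + 1) - Q j)) = j :=
      inv_block hQ0 hQs (Nat.mod_lt _ hdj)
    have h2 : inv Q (Q j' + (y - Q j' + 1) % (Q (j' + 1) - Q j')) = j' :=
      inv_block hQ0 hQs (Nat.mod_lt _ hdj')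
    rw [← h1, ← h2, hxy]
  rw [← hjj'] at hxy hy hy'
  have : (x - Q j + 1) % (Q (j + 1) - Q j) = (y - Q j + 1) % (Q (j + 1) - Q j) :=
    Nat.add_left_cancel hxy
  have := Nat.ModEq.add_right_cancel' 1 (this : _ ≡ _ [MOD _])
  have : x - Q j = y - Q j :=
    Nat.ModEq.eq_of_lt_of_lt this hx' hy'
  omega

theorem orbit_eq (a : ℕ) :
    Orbit (bf Q) a = Set.Ico (Q (inv Q a)) (Q (inv Q a + 1)) := by
  obtain ⟨ha, ha'⟩ := decomp hQ0 hQs a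
  set j := inv Q a with hj
  have hd := d_pos hQs j
  ext b
  constructor
  · rintro ⟨m, n, hmn⟩
    obtain ⟨hb, hb'⟩ := decomp hQ0 hQs b
    set j' := inv Q b with hj'
    rw [ha, bf_iter hQ0 hQs ha'] at hmn
    rw [hb, bf_iter hQ0 hQs hb'] at hmn
    have hdj' := d_pos hQs j'
    have hjj' : j = j' := by
      have h1 : inv Q (Q j + (a - Q j + m) % (Q (j + 1) - Q j)) = j :=
        inv_block hQ0 hQs (Nat.mod_lt _ hd)
      have h2 : inv Q (Q j' + (b - Q j' + n) % (Q (j' + 1) - Q j')) = j' :=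
        inv_block hQ0 hQs (Nat.mod_lt _ hdj')
      rw [← h1, ← h2, hmn]
    rw [← hjj'] at hb hb'
    have := hQs j
    exact ⟨by omega, by omega⟩
  · rintro ⟨hb, hb'⟩
    refine ⟨b - Q j, a - Q j, ?_⟩
    rw [ha, bf_iter hQ0 hQs ha']
    conv_rhs => rw [show b = Q j + (b - Q j) by omega, bf_iter hQ0 hQs (by omega)]
    have h4 : Q j + (a - Q j) - Q j = a - Q j := by omega
    rw [h4, Nat.add_comm (a - Q j) (b - Q j)]

theorem orbit_ncard (a : ℕ) :
    (Orbit (bf Q) a).ncard = Q (inv Q a + 1) - Q (inv Q a) := by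
  rw [orbit_eq hQ0 hQs, ← Finset.coe_Ico, Set.ncard_coe_finset, Nat.card_Ico]

theorem orbit_finite (a : ℕ) : (Orbit (bf Q) a).Finite := by
  rw [orbit_eq hQ0 hQs]; exact Set.finite_Ico _ _

theorem iter_fixed_iff {j r : ℕ} (hr : r < Q (j + 1) - Q j) (p : ℕ) :
    (bf Q)^[p] (Q j + r) = Q j + r ↔ (Q (j + 1) - Q j) ∣ p := by
  have hd := d_pos hQs j
  rw [bf_iter hQ0 hQs hr]
  constructor
  · intro h
    have h' : r + p ≡ r + 0 [MOD Q (j + 1) - Q j] := by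
      unfold Nat.ModEq
      have h5 : (r + p) % (Q (j + 1) - Q j) = r := by omega
      rw [h5, Nat.add_zero, Nat.mod_eq_of_lt hr]
    exact (Nat.modEq_zero_iff_dvd).1 (Nat.ModEq.add_left_cancel' r h')
  · intro h
    have hp : p % (Q (j + 1) - Q j) = 0 := (Nat.modEq_zero_iff_dvd).2 h
    simp [Nat.add_mod, hp, Nat.mod_eq_of_lt hr]

end

theorem primrec_inv (hQ : Primrec Q) : Primrec (inv Q) := by
  have : Primrec₂ (fun (m ih : ℕ) => if Q (ih + 1) ≤ m + 1 then ih + 1 else ih) := by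
    apply Primrec.ite
    · exact Primrec.nat_le.comp ((hQ.comp (Primrec.succ.comp Primrec.snd)))
        (Primrec.succ.comp Primrec.fst)
    · exact Primrec.succ.comp Primrec.snd
    · exact Primrec.snd
  exact Primrec.nat_rec₁ 0 this

theorem primrec_bf (hQ : Primrec Q) : Primrec (bf Q) := by
  have hi : Primrec (inv Q) := primrec_inv hQ
  apply Primrec.ite
  · exact Primrec.eq.comp Primrec.succ ((hQ.comp (Primrec.succ.comp hi)))
  · exact hQ.comp hi
  · exact Primrec.succ


/-! ### helpers: iterate and find are computable -/

theorem computable_iterate {g : ℕ → ℕ} (hg : Computable g) :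
    Computable₂ fun t b : ℕ => g^[t] b := by
  have h1 : Computable fun p : ℕ × ℕ =>
      Nat.rec (motive := fun _ => ℕ) p.2 (fun _ IH => g IH) p.1 :=
    Computable.nat_rec Computable.fst Computable.snd
      ((hg.comp (Computable.snd.comp Computable.snd)).to₂)
  have h2 : ∀ p : ℕ × ℕ,
      Nat.rec (motive := fun _ => ℕ) p.2 (fun _ IH => g IH) p.1 = g^[p.1] p.2 := by
    rintro ⟨t, b⟩
    induction t with
    | zero => rfl
    | succ t ih => simpa [Function.iterate_succ_apply'] using congrArg g ih
  exact (h1.of_eq h2).to₂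

theorem computable_nat_find {α : Type*} [Primcodable α] {p : α → ℕ → Prop}
    [∀ a n, Decidable (p a n)]
    (hp : Computable₂ fun a n => decide (p a n)) (H : ∀ a, ∃ n, p a n) :
    Computable fun a => Nat.find (H a) := by
  have hr : Partrec fun a => Nat.rfind fun n => (Part.some (decide (p a n)) : Part Bool) :=
    Partrec.rfind hp.partrec₂
  refine hr.of_eq_tot fun a => ?_
  apply Nat.mem_rfind.2
  refine ⟨Part.mem_some_iff.2 ?_, fun hm => Part.mem_some_iff.2 ?_⟩
  · exact (decide_eq_true (Nat.find_spec (H a))).symm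
  · exact (decide_eq_false (Nat.find_min (H a) hm)).symm

/-! ### the structure `f0` -/

def tri : ℕ → ℕ := fun k => Nat.rec 0 (fun j ih => ih + j + 1) k

theorem tri_zero : tri 0 = 0 := rfl

theorem tri_succ (j : ℕ) : tri (j + 1) = tri j + j + 1 := rfl

theorem tri_lt (j : ℕ) : tri j < tri (j + 1) := by rw [tri_succ]; omega

theorem tri_d (j : ℕ) : tri (j + 1) - tri j = j + 1 := by rw [tri_succ]; omega

theorem primrec_tri : Primrec tri := by
  apply Primrec.nat_rec₁ 0
  exact Primrec.succ.comp (Primrec.nat_add.comp Primrec.snd Primrec.fst)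

def f0 : ℕ → ℕ := bf tri

theorem primrec_f0 : Primrec f0 := primrec_bf primrec_tri

theorem f0_inj : Function.Injective f0 := bf_injective tri_zero tri_lt

theorem invT_block {k r : ℕ} (hr : r < k + 1) : inv tri (tri k + r) = k :=
  inv_block tri_zero tri_lt (by rw [tri_d]; omega)

theorem f0_orbit (a : ℕ) :
    Orbit f0 a = Set.Ico (tri (inv tri a)) (tri (inv tri a + 1)) :=
  orbit_eq tri_zero tri_lt a

theorem f0_orbit_ncard (a : ℕ) : (Orbit f0 a).ncard = inv tri a + 1 := by
  rw [show f0 = bf tri from rfl, orbit_ncard tri_zero tri_lt a, tri_d]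

theorem f0_iter {k r : ℕ} (hr : r < k + 1) (m : ℕ) :
    f0^[m] (tri k + r) = tri k + (r + m) % (k + 1) := by
  have := bf_iter tri_zero tri_lt (j := k) (r := r) (by rw [tri_d]; omega) m
  rwa [tri_d] at this

theorem f0_fixed_iff {k r : ℕ} (hr : r < k + 1) (p : ℕ) :
    f0^[p] (tri k + r) = tri k + r ↔ (k + 1) ∣ p := by
  have := iter_fixed_iff tri_zero tri_lt (j := k) (r := r) (by rw [tri_d]; omega) p
  rwa [tri_d] at this

theorem f0_decomp (x : ℕ) : x = tri (inv tri x) + (x - tri (inv tri x)) ∧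
    x - tri (inv tri x) < inv tri x + 1 := by
  have := decomp tri_zero tri_lt x
  rw [tri_d] at this
  exact this

/-- mod-cancellation used for injectivity. -/
theorem mod_cancel {d c r r' : ℕ} (hr : r < d) (hr' : r' < d)
    (h : (c + r) % d = (c + r') % d) : r = r' :=
  Nat.ModEq.eq_of_lt_of_lt (Nat.ModEq.add_left_cancel' c h) hr hr'



/-! ### computable categoricity of `f0` -/

theorem comp_cat (g : ℕ → ℕ) (hg : Computable g)
    (e : ℕ → ℕ) (he : Function.Bijective e) (hcomm : ∀ n, e (f0 n) = g (e n)) :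
    ∃ h : ℕ → ℕ, Computable h ∧ Function.Bijective h ∧ ∀ n, h (f0 n) = g (h n) := by
  classical
  have hcomm_iter : ∀ (m x : ℕ), e (f0^[m] x) = g^[m] (e x) := by
    intro m
    induction m with
    | zero => intro x; rfl
    | succ m ih =>
      intro x
      rw [Function.iterate_succ_apply', Function.iterate_succ_apply', hcomm, ih]
  have gper : ∀ (x p : ℕ), g^[p] (e x) = e x ↔ (inv tri x + 1) ∣ p := by
    intro x p
    have key := f0_fixed_iff (k := inv tri x) (r := x - tri (inv tri x)) (f0_decomp x).2 p
    rw [← (f0_decomp x).1] at key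
    rw [← hcomm_iter, ← key]
    exact ⟨fun hp => he.injective hp, fun hp => by rw [hp]⟩
  have exP : ∀ b : ℕ, ∃ t, g^[t + 1] b = b := by
    intro b
    obtain ⟨x, rfl⟩ := he.surjective b
    exact ⟨inv tri x, (gper x _).2 dvd_rfl⟩
  set per : ℕ → ℕ := fun b => Nat.find (exP b) + 1 with hperdef
  have per_eq : ∀ x : ℕ, per (e x) = inv tri x + 1 := by
    intro x
    have hfind : Nat.find (exP (e x)) = inv tri x := by
      rw [Nat.find_eq_iff]
      refine ⟨(gper x _).2 dvd_rfl, fun m hm hc => ?_⟩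
      have := Nat.le_of_dvd (by omega) ((gper x _).1 hc)
      omega
    simp only [hperdef, hfind]
  have exB : ∀ k : ℕ, ∃ b, per b = k + 1 := by
    intro k
    refine ⟨e (tri k), ?_⟩
    rw [per_eq (tri k)]
    have : inv tri (tri k) = k := by
      have := invT_block (k := k) (r := 0) (by omega)
      simpa using this
    rw [this]
  set b0 : ℕ → ℕ := fun k => Nat.find (exB k) with hb0def
  have hx0 : ∀ k : ℕ, ∃ x, e x = b0 k := fun k => he.surjective _
  set x0 : ℕ → ℕ := fun k => (hx0 k).choose with hx0def
  have hex0 : ∀ k, e (x0 k) = b0 k := fun k => (hx0 k).choose_spec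
  have hk0 : ∀ k, inv tri (x0 k) = k := by
    intro k
    have h1 : per (b0 k) = k + 1 := Nat.find_spec (exB k)
    have h2 : per (e (x0 k)) = inv tri (x0 k) + 1 := per_eq _
    rw [hex0 k] at h2
    omega
  set r0 : ℕ → ℕ := fun k => x0 k - tri k with hr0def
  have hr0 : ∀ k, x0 k = tri k + r0 k ∧ r0 k < k + 1 := by
    intro k
    have := f0_decomp (x0 k)
    rw [hk0 k] at this
    exact this
  set h : ℕ → ℕ := fun x => g^[x - tri (inv tri x)] (b0 (inv tri x)) with hhdef
  have key : ∀ k r, r < k + 1 → h (tri k + r) = e (tri k + (r0 k + r) % (k + 1)) := by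
    intro k r hr
    have h1 : inv tri (tri k + r) = k := invT_block hr
    have h2 : h (tri k + r) = g^[r] (b0 k) := by
      simp only [hhdef, h1]
      congr 1
      omega
    rw [h2, ← hex0 k, ← hcomm_iter]
    congr 1
    rw [(hr0 k).1, f0_iter (hr0 k).2]
  have hinj : Function.Injective h := by
    intro x y hxy
    obtain ⟨hx, hx'⟩ := f0_decomp x
    obtain ⟨hy, hy'⟩ := f0_decomp y
    rw [hx, key _ _ hx'] at hxy
    rw [hy, key _ _ hy'] at hxy
    have h2 := he.injective hxy
    have hkk : inv tri x = inv tri y := by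
      have e1 := invT_block (k := inv tri x)
        (r := (r0 (inv tri x) + (x - tri (inv tri x))) % (inv tri x + 1))
        (Nat.mod_lt _ (by omega))
      have e2 := invT_block (k := inv tri y)
        (r := (r0 (inv tri y) + (y - tri (inv tri y))) % (inv tri y + 1))
        (Nat.mod_lt _ (by omega))
      rw [← e1, ← e2, h2]
    rw [← hkk] at h2
    have h3 := Nat.add_left_cancel h2
    have h4 := mod_cancel hx' (by rw [hkk]; exact hy') h3
    have h5 : tri (inv tri x) = tri (inv tri y) := by rw [hkk]
    omega
  have hsurj : Function.Surjective h := by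
    intro b
    obtain ⟨x, rfl⟩ := he.surjective b
    obtain ⟨hx, hx'⟩ := f0_decomp x
    set k := inv tri x with hk
    set rr := x - tri k with hrr
    have hr0k := (hr0 k).2
    refine ⟨tri k + (rr + (k + 1) - r0 k) % (k + 1), ?_⟩
    rw [key _ _ (Nat.mod_lt _ (by omega))]
    have hmod : (r0 k + (rr + (k + 1) - r0 k) % (k + 1)) % (k + 1) = rr := by
      rw [Nat.add_mod_mod]
      have hh : r0 k + (rr + (k + 1) - r0 k) = rr + (k + 1) := by omega
      rw [hh, Nat.add_mod_right, Nat.mod_eq_of_lt hx']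
    rw [hmod, ← hx]
  have hcm : ∀ x : ℕ, h (f0 x) = g (h x) := by
    intro x
    obtain ⟨hx, hx'⟩ := f0_decomp x
    set k := inv tri x with hk
    set rr := x - tri k with hrr
    have h1 : f0 x = tri k + (rr + 1) % (k + 1) := by
      conv_lhs => rw [hx]
      have := f0_iter (k := k) (r := rr) hx' 1
      simpa using this
    rw [h1, key _ _ (Nat.mod_lt _ (by omega))]
    conv_rhs => rw [hx, key _ _ hx']
    rw [← hcomm]
    congr 1
    have h2 := f0_iter (k := k) (r := (r0 k + rr) % (k + 1)) (Nat.mod_lt _ (by omega)) 1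
    rw [Function.iterate_one] at h2
    rw [h2, Nat.mod_add_mod, Nat.add_mod_mod, Nat.add_assoc]
  -- computability
  have hEq : Computable₂ fun a b : ℕ => decide (a = b) := Primrec.eq.decide.to_comp
  have hinv : Computable (inv tri) := (primrec_inv primrec_tri).to_comp
  have htri : Computable tri := primrec_tri.to_comp
  have hit : Computable₂ fun t b : ℕ => g^[t] b := computable_iterate hg
  have hpP : Computable₂ fun b t : ℕ => decide (g^[t + 1] b = b) :=
    Computable₂.mk
      (hEq.comp (hit.comp (Computable.succ.comp Computable.snd) Computable.fst)
        Computable.fst)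
  have hfindP : Computable fun b => Nat.find (exP b) := computable_nat_find hpP exP
  have hperC : Computable per := Computable.succ.comp hfindP
  have hpB : Computable₂ fun k b : ℕ => decide (per b = k + 1) :=
    Computable₂.mk
      (hEq.comp (hperC.comp Computable.snd) (Computable.succ.comp Computable.fst))
  have hb0C : Computable b0 := computable_nat_find hpB exB
  have hsub : Computable fun x : ℕ => x - tri (inv tri x) :=
    (Primrec.nat_sub.to_comp).comp Computable.id (htri.comp hinv)
  have hC : Computable h := hit.comp hsub (hb0C.comp hinv)
  exact ⟨h, hC, ⟨hinj, hsurj⟩, hcm⟩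


/-! ### a stack machine computing Ackermann, and the sparse set S -/

def step (s : List ℕ × ℕ) : List ℕ × ℕ :=
  List.casesOn s.1 ([], s.2) fun a L =>
    if a = 0 then (L, s.2 + 1)
    else if s.2 = 0 then ((a - 1) :: L, 1)
    else (a :: (a - 1) :: L, s.2 - 1)

theorem step_nil (n : ℕ) : step ([], n) = ([], n) := rfl

theorem step_zero (L : List ℕ) (n : ℕ) : step (0 :: L, n) = (L, n + 1) := rfl

theorem step_succ_zero (m : ℕ) (L : List ℕ) : step ((m + 1) :: L, 0) = (m :: L, 1) := by
  simp [step]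

theorem step_succ_succ (m : ℕ) (L : List ℕ) (n : ℕ) :
    step ((m + 1) :: L, n + 1) = ((m + 1) :: m :: L, n) := by
  simp [step]

theorem primrec_step : Primrec step := by
  apply Primrec.list_casesOn (f := fun s : List ℕ × ℕ => s.1)
    (g := fun s : List ℕ × ℕ => (([] : List ℕ), s.2))
    (h := fun s (p : ℕ × List ℕ) =>
      if p.1 = 0 then (p.2, s.2 + 1)
      else if s.2 = 0 then ((p.1 - 1) :: p.2, 1)
      else (p.1 :: (p.1 - 1) :: p.2, s.2 - 1))
  · exact Primrec.fst
  · exact (Primrec.const _).pair Primrec.snd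
  · apply Primrec.ite
    · exact Primrec.eq.comp (Primrec.fst.comp Primrec.snd) (Primrec.const 0)
    · exact (Primrec.snd.comp Primrec.snd).pair
        (Primrec.succ.comp (Primrec.snd.comp Primrec.fst))
    · apply Primrec.ite
      · exact Primrec.eq.comp (Primrec.snd.comp Primrec.fst) (Primrec.const 0)
      · exact (Primrec.list_cons.comp
          (Primrec.pred.comp (Primrec.fst.comp Primrec.snd))
          (Primrec.snd.comp Primrec.snd)).pair (Primrec.const 1)
      · exact (Primrec.list_cons.comp (Primrec.fst.comp Primrec.snd)
          (Primrec.list_cons.comp (Primrec.pred.comp (Primrec.fst.comp Primrec.snd))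
            (Primrec.snd.comp Primrec.snd))).pair
          (Primrec.pred.comp (Primrec.snd.comp Primrec.fst))

theorem primrec_stepIter : Primrec₂ fun (s : List ℕ × ℕ) (t : ℕ) => step^[t] s := by
  have h1 := Primrec.nat_rec (f := fun s : List ℕ × ℕ => s)
    (g := fun (_ : List ℕ × ℕ) (p : ℕ × (List ℕ × ℕ)) => step p.2)
    Primrec.id ((primrec_step.comp (Primrec.snd.comp Primrec.snd)).to₂)
  refine h1.of_eq fun s t => ?_
  induction t with
  | zero => rfl
  | succ t ih => rw [Function.iterate_succ_apply']; exact congrArg step ih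

theorem stay (t n : ℕ) : step^[t] ([], n) = ([], n) := by
  induction t with
  | zero => rfl
  | succ t ih => rw [Function.iterate_succ_apply', ih, step_nil]

theorem reach (m : ℕ) : ∀ n L, ∃ t, step^[t] (m :: L, n) = (L, ack m n) := by
  induction m with
  | zero =>
    intro n L
    exact ⟨1, by rw [Function.iterate_one, step_zero, ack_zero]⟩
  | succ m ihm =>
    intro n
    induction n with
    | zero =>
      intro L
      obtain ⟨t, ht⟩ := ihm 1 L
      exact ⟨t + 1, by rw [Function.iterate_succ_apply, step_succ_zero, ht, ack_succ_zero]⟩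
    | succ n ihn =>
      intro L
      obtain ⟨t1, ht1⟩ := ihn (m :: L)
      obtain ⟨t2, ht2⟩ := ihm (ack (m + 1) n) L
      refine ⟨t2 + (t1 + 1), ?_⟩
      rw [Function.iterate_add_apply, Function.iterate_succ_apply, step_succ_succ, ht1, ht2,
        ack_succ_succ]

theorem halt (k : ℕ) : ∃ t, (step^[t] ([k], k)).1 = [] := by
  obtain ⟨t, ht⟩ := reach k k []
  exact ⟨t, by rw [ht]⟩

def T (k : ℕ) : ℕ := Nat.find (halt k)

theorem done_mono {k u : ℕ} (hu : T k ≤ u) : (step^[u] ([k], k)).1 = [] := by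
  have h1 := Nat.find_spec (halt k)
  have h2 : step^[T k] ([k], k) = ([], (step^[T k] ([k], k)).2) := by
    exact Prod.ext h1 rfl
  rw [show u = (u - T k) + T k by omega, Function.iterate_add_apply, h2, stay]

theorem val (k : ℕ) : (step^[T k] ([k], k)).2 = ack k k := by
  obtain ⟨t0, h0⟩ := reach k k []
  have hle : T k ≤ t0 := Nat.find_min' (halt k) (by rw [h0])
  have h2 : step^[T k] ([k], k) = ([], (step^[T k] ([k], k)).2) :=
    Prod.ext (Nat.find_spec (halt k)) rfl
  have h3 : step^[t0] ([k], k) = ([], (step^[T k] ([k], k)).2) := by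
    rw [show t0 = (t0 - T k) + T k by omega, Function.iterate_add_apply, h2, stay]
  rw [h0] at h3
  exact (congrArg Prod.snd h3).symm

theorem snd_step (s : List ℕ × ℕ) : (step s).2 ≤ s.2 + 1 := by
  rcases s with ⟨_ | ⟨a, L⟩, n⟩
  · simp [step_nil]
  · rcases a with _ | m
    · simp [step_zero]
    · rcases n with _ | n
      · simp [step_succ_zero]
      · simp [step_succ_succ]
        omega

theorem snd_iter (t : ℕ) (s : List ℕ × ℕ) : (step^[t] s).2 ≤ s.2 + t := by
  induction t with
  | zero => simp
  | succ t ih =>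
    rw [Function.iterate_succ_apply']
    have := snd_step (step^[t] s)
    omega

theorem T_ge (k : ℕ) : ack k k ≤ k + T k := by
  have h1 := val k
  have h2 := snd_iter (T k) ([k], k)
  simp only [h1] at h2
  omega

theorem T_spec (k : ℕ) : (step^[T k] ([k], k)).1 = [] := Nat.find_spec (halt k)

theorem T_min' {k m : ℕ} (h : (step^[m] ([k], k)).1 = []) : T k ≤ m :=
  Nat.find_min' (halt k) h

theorem T_min {k m : ℕ} (h : m < T k) : ¬(step^[m] ([k], k)).1 = [] :=
  Nat.find_min (halt k) h

theorem T_pos (k : ℕ) : 1 ≤ T k := by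
  by_contra hc
  have h0 : T k = 0 := by omega
  have hspec : (step^[T k] ([k], k)).1 = [] := T_spec k
  rw [h0] at hspec
  simp at hspec

def B (k : ℕ) : ℕ := Nat.pair k (T k)

theorem B_ge (k : ℕ) : ack k k ≤ B k + k := by
  have := Nat.right_le_pair k (T k)
  have := T_ge k
  unfold B
  omega

/-- membership in the sparse set -/
def inSP (x : ℕ) : Prop :=
  (step^[x.unpair.2] ([x.unpair.1], x.unpair.1)).1 = [] ∧
    ¬(step^[x.unpair.2 - 1] ([x.unpair.1], x.unpair.1)).1 = []

instance : DecidablePred inSP := fun _ => by unfold inSP; infer_instance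

theorem inSP_iff (x : ℕ) : inSP x ↔ x = B x.unpair.1 := by
  constructor
  · rintro ⟨h1, h2⟩
    have hle : T x.unpair.1 ≤ x.unpair.2 := T_min' h1
    have hgt : x.unpair.2 - 1 < T x.unpair.1 := by
      by_contra hc
      exact h2 (done_mono (by omega))
    have hTpos := T_pos x.unpair.1
    have ht : x.unpair.2 = T x.unpair.1 := by omega
    conv_lhs => rw [← Nat.pair_unpair x]
    rw [ht]
    rfl
  · intro hx
    have hu : x.unpair = (x.unpair.1, T x.unpair.1) := by
      rw [hx]
      simp [B, Nat.unpair_pair]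
    constructor
    · rw [show x.unpair.2 = T x.unpair.1 from congrArg Prod.snd hu]
      exact T_spec _
    · rw [show x.unpair.2 = T x.unpair.1 from congrArg Prod.snd hu]
      have := T_pos x.unpair.1
      exact T_min (by omega)

theorem inSP_B (k : ℕ) : inSP (B k) := by
  rw [inSP_iff]
  simp [B, Nat.unpair_pair]

theorem primrec_inSP : PrimrecPred inSP := by
  have hst : Primrec fun x : ℕ => (([x.unpair.1], x.unpair.1) : List ℕ × ℕ) :=
    ((Primrec.list_cons.comp (Primrec.fst.comp Primrec.unpair) (Primrec.const [])).pair
      (Primrec.fst.comp Primrec.unpair))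
  have h1 : Primrec fun x : ℕ => (step^[x.unpair.2] ([x.unpair.1], x.unpair.1)).1 :=
    Primrec.fst.comp (primrec_stepIter.comp hst (Primrec.snd.comp Primrec.unpair))
  have h2 : Primrec fun x : ℕ => (step^[x.unpair.2 - 1] ([x.unpair.1], x.unpair.1)).1 :=
    Primrec.fst.comp (primrec_stepIter.comp hst
      (Primrec.pred.comp (Primrec.snd.comp Primrec.unpair)))
  exact PrimrecPred.and (Primrec.eq.comp h1 (Primrec.const []))
    (PrimrecPred.not (Primrec.eq.comp h2 (Primrec.const [])))

/-! ### the bijection `sb` -/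

def cnt : ℕ → ℕ := fun x => Nat.rec 0 (fun m ih => if inSP m then ih else ih + 1) x

theorem cnt_succ (x : ℕ) : cnt (x + 1) = if inSP x then cnt x else cnt x + 1 := rfl

theorem cnt_mono {x y : ℕ} (h : x ≤ y) : cnt x ≤ cnt y := by
  induction h with
  | refl => exact le_rfl
  | @step m h ih =>
    rw [cnt_succ]
    split <;> omega

theorem cnt_lt {x y : ℕ} (h : x < y) (hx : ¬inSP x) : cnt x < cnt y := by
  have h1 : cnt (x + 1) = cnt x + 1 := by rw [cnt_succ, if_neg hx]
  have := cnt_mono (show x + 1 ≤ y from h)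
  omega

theorem primrec_cnt : Primrec cnt := by
  apply Primrec.nat_rec₁ 0
  apply Primrec.ite (primrec_inSP.comp Primrec.fst)
  · exact Primrec.snd
  · exact Primrec.succ.comp Primrec.snd

def sb (x : ℕ) : ℕ := if inSP x then 2 * x.unpair.1 + 1 else 2 * cnt x

theorem primrec_sb : Primrec sb := by
  apply Primrec.ite primrec_inSP
  · exact Primrec.succ.comp (Primrec.nat_mul.comp (Primrec.const 2)
      (Primrec.fst.comp Primrec.unpair))
  · exact Primrec.nat_mul.comp (Primrec.const 2) primrec_cnt

theorem sb_B (k : ℕ) : sb (B k) = 2 * k + 1 := by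
  rw [sb, if_pos (inSP_B k)]
  simp [B, Nat.unpair_pair]

theorem notS_unbounded (x : ℕ) : ∃ y, x ≤ y ∧ ¬inSP y := by
  refine ⟨Nat.pair x 0, Nat.left_le_pair x 0, ?_⟩
  rintro ⟨h1, -⟩
  simp [Nat.unpair_pair] at h1

theorem cnt_const_range {a b : ℕ} (h : a ≤ b) (hS : ∀ z, a ≤ z → z < b → inSP z) :
    cnt b = cnt a := by
  induction b with
  | zero => rw [Nat.le_zero.1 h]
  | succ b ih =>
    rcases Nat.lt_or_ge a (b + 1) with h' | h'
    · rw [cnt_succ, if_pos (hS b (by omega) (by omega)), ih (by omega)]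
      intro z hz hz'
      exact hS z hz (by omega)
    · have : a = b + 1 := by omega
      rw [this]

theorem exC (c : ℕ) : ∃ x, ¬inSP x ∧ cnt x = c := by
  induction c with
  | zero =>
    have hex : ∃ y, ¬inSP y := (notS_unbounded 0).imp fun y hy => hy.2
    refine ⟨Nat.find hex, Nat.find_spec hex, ?_⟩
    rw [show (0 : ℕ) = cnt 0 from rfl, cnt_const_range (Nat.zero_le _) ?_]
    intro z _ hz
    by_contra hc
    exact absurd (Nat.find_min' hex hc) (by omega)
  | succ c ihc =>
    obtain ⟨x, hx, hcx⟩ := ihc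
    have hex : ∃ z, x < z ∧ ¬inSP z := by
      obtain ⟨y, hy1, hy2⟩ := notS_unbounded (x + 1)
      exact ⟨y, by omega, hy2⟩
    set y := Nat.find hex with hydef
    obtain ⟨hy1, hy2⟩ := Nat.find_spec hex
    refine ⟨y, hy2, ?_⟩
    have h1 : cnt y = cnt (x + 1) := by
      apply cnt_const_range (by omega)
      intro z hz hz'
      by_contra hc
      exact absurd (Nat.find_min' hex ⟨by omega, hc⟩) (by omega)
    rw [h1, cnt_succ, if_neg hx, hcx]

theorem sb_inj : Function.Injective sb := by
  intro x y hxy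
  unfold sb at hxy
  by_cases hx : inSP x <;> by_cases hy : inSP y
  · rw [if_pos hx, if_pos hy] at hxy
    have : x.unpair.1 = y.unpair.1 := by omega
    rw [(inSP_iff x).1 hx, (inSP_iff y).1 hy, this]
  · rw [if_pos hx, if_neg hy] at hxy; omega
  · rw [if_neg hx, if_pos hy] at hxy; omega
  · rw [if_neg hx, if_neg hy] at hxy
    have hc : cnt x = cnt y := by omega
    rcases lt_trichotomy x y with h | h | h
    · exact absurd hc (by have := cnt_lt h hx; omega)
    · exact h
    · exact absurd hc (by have := cnt_lt h hy; omega)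

theorem sb_surj : Function.Surjective sb := by
  intro n
  rcases Nat.even_or_odd n with ⟨c, hc⟩ | ⟨k, hk⟩
  · obtain ⟨x, hx, hcx⟩ := exC c
    exact ⟨x, by rw [sb, if_neg hx, hcx]; omega⟩
  · exact ⟨B k, by rw [sb_B]; omega⟩

theorem sb_bij : Function.Bijective sb := ⟨sb_inj, sb_surj⟩


/-! ### the punctual copy `g0` -/

def Qg : ℕ → ℕ := fun j => Nat.rec 0 (fun i ih => ih + (sb i + 1)) j

theorem Qg_zero : Qg 0 = 0 := rfl

theorem Qg_succ (j : ℕ) : Qg (j + 1) = Qg j + (sb j + 1) := rfl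

theorem Qg_lt (j : ℕ) : Qg j < Qg (j + 1) := by rw [Qg_succ]; omega

theorem Qg_d (j : ℕ) : Qg (j + 1) - Qg j = sb j + 1 := by rw [Qg_succ]; omega

theorem Qg_ge (j : ℕ) : j ≤ Qg j := by
  induction j with
  | zero => exact le_rfl
  | succ j ih => rw [Qg_succ]; omega

theorem primrec_Qg : Primrec Qg := by
  apply Primrec.nat_rec₁ 0
  exact Primrec.nat_add.comp Primrec.snd (Primrec.succ.comp (primrec_sb.comp Primrec.fst))

def g0 : ℕ → ℕ := bf Qg

theorem primrec_g0 : Primrec g0 := primrec_bf primrec_Qg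

theorem g0_inj : Function.Injective g0 := bf_injective Qg_zero Qg_lt

noncomputable def E : ℕ ≃ ℕ := Equiv.ofBijective sb sb_bij

theorem sb_Esymm (k : ℕ) : sb (E.symm k) = k := E.apply_symm_apply k

theorem Esymm_sb (j : ℕ) : E.symm (sb j) = j := E.symm_apply_apply j

noncomputable def Hiso : ℕ → ℕ := fun x => Qg (E.symm (inv tri x)) + (x - tri (inv tri x))

noncomputable def Hinv : ℕ → ℕ := fun y => tri (sb (inv Qg y)) + (y - Qg (inv Qg y))

theorem invQg_block {j r : ℕ} (hr : r < sb j + 1) : inv Qg (Qg j + r) = j :=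
  inv_block Qg_zero Qg_lt (by rw [Qg_d]; omega)

theorem Hiso_apply {k r : ℕ} (hr : r < k + 1) :
    Hiso (tri k + r) = Qg (E.symm k) + r := by
  unfold Hiso
  rw [invT_block hr]
  congr 1
  omega

theorem Hinv_apply {j r : ℕ} (hr : r < sb j + 1) :
    Hinv (Qg j + r) = tri (sb j) + r := by
  unfold Hinv
  rw [invQg_block hr]
  congr 1
  omega

theorem Hiso_left : Function.LeftInverse Hinv Hiso := by
  intro x
  obtain ⟨hx, hx'⟩ := f0_decomp x
  conv_lhs => rw [hx, Hiso_apply hx']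
  rw [Hinv_apply (by rw [sb_Esymm]; exact hx'), sb_Esymm]
  omega

theorem Hiso_right : Function.RightInverse Hinv Hiso := by
  intro y
  obtain ⟨hy, hy'⟩ := decomp Qg_zero Qg_lt y
  rw [Qg_d] at hy'
  conv_lhs => rw [hy, Hinv_apply hy']
  rw [Hiso_apply hy', Esymm_sb]
  omega

theorem Hiso_bij : Function.Bijective Hiso := ⟨Hiso_left.injective, Hiso_right.surjective⟩

theorem Hiso_comm (x : ℕ) : Hiso (f0 x) = g0 (Hiso x) := by
  obtain ⟨hx, hx'⟩ := f0_decomp x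
  set k := inv tri x with hk
  set r := x - tri k with hr
  have h1 : f0 x = tri k + (r + 1) % (k + 1) := by
    conv_lhs => rw [hx]
    have := f0_iter (k := k) (r := r) hx' 1
    simpa using this
  rw [h1, Hiso_apply (Nat.mod_lt _ (by omega))]
  conv_rhs => rw [hx, Hiso_apply hx']
  rw [show g0 = bf Qg from rfl,
    bf_block Qg_zero Qg_lt (j := E.symm k) (r := r) (by rw [Qg_d, sb_Esymm]; omega),
    Qg_d, sb_Esymm]

theorem no_punctual_iso :
    ¬∃ h h' : ℕ → ℕ, Function.LeftInverse h' h ∧ Function.RightInverse h' h ∧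
      (∀ n : ℕ, h (f0 n) = g0 (h n)) ∧ Primrec h ∧ Primrec h' := by
  rintro ⟨h, h', hL, hR, hcomm, hP, -⟩
  have hinj : Function.Injective h := hL.injective
  have hsurj : Function.Surjective h := hR.surjective
  have hcomm_iter : ∀ (m x : ℕ), h (f0^[m] x) = g0^[m] (h x) := by
    intro m
    induction m with
    | zero => intro x; rfl
    | succ m ih =>
      intro x
      rw [Function.iterate_succ_apply', Function.iterate_succ_apply', hcomm, ih]
  have horb : ∀ a : ℕ, Orbit g0 (h a) = h '' Orbit f0 a := by
    intro a
    ext b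
    constructor
    · rintro ⟨m, n, hmn⟩
      obtain ⟨x, rfl⟩ := hsurj b
      rw [← hcomm_iter, ← hcomm_iter] at hmn
      exact ⟨x, ⟨m, n, hinj hmn⟩, rfl⟩
    · rintro ⟨x, ⟨m, n, hmn⟩, rfl⟩
      exact ⟨m, n, by rw [← hcomm_iter, ← hcomm_iter, hmn]⟩
  have hcard : ∀ a : ℕ, (Orbit g0 (h a)).ncard = inv tri a + 1 := by
    intro a
    rw [horb, Set.ncard_image_of_injective _ hinj, f0_orbit_ncard]
  have hcard2 : ∀ b : ℕ, (Orbit g0 b).ncard = sb (inv Qg b) + 1 := by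
    intro b
    rw [show g0 = bf Qg from rfl, orbit_ncard Qg_zero Qg_lt, Qg_d]
  have hmain : ∀ k : ℕ, B k ≤ h (tri (2 * k + 1)) := by
    intro k
    have h1 : inv tri (tri (2 * k + 1)) = 2 * k + 1 := by
      have := invT_block (k := 2 * k + 1) (r := 0) (by omega)
      simpa using this
    have h2 : sb (inv Qg (h (tri (2 * k + 1)))) + 1 = 2 * k + 1 + 1 := by
      rw [← hcard2, hcard, h1]
    have h3 : inv Qg (h (tri (2 * k + 1))) = B k := by
      apply sb_inj
      rw [sb_B]
      omega
    have h4 := (decomp Qg_zero Qg_lt (h (tri (2 * k + 1)))).1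
    have h5 := Qg_ge (inv Qg (h (tri (2 * k + 1))))
    rw [h3] at h4 h5
    omega
  have hF : Primrec fun k : ℕ => h (tri (2 * k + 1)) :=
    hP.comp (primrec_tri.comp
      (Primrec.succ.comp (Primrec.nat_mul.comp (Primrec.const 2) Primrec.id)))
  obtain ⟨M, hM⟩ := exists_lt_ack_of_nat_primrec (Primrec.nat_iff.1 hF)
  have hcontra : ack (M + 3) (M + 3) < ack (M + 3) (M + 3) := by
    calc ack (M + 3) (M + 3) ≤ B (M + 3) + (M + 3) := B_ge _
    _ ≤ h (tri (2 * (M + 3) + 1)) + (M + 3) := by have := hmain (M + 3); omega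
    _ < ack M (M + 3) + (M + 3) := by have := hM (M + 3); omega
    _ ≤ (ack M (M + 3) + 1) ^ 2 := by have := lt_ack_right M (M + 3); nlinarith
    _ ≤ ack (M + 3) (M + 3) := ack_add_one_sq_lt_ack_add_three M (M + 3)
  omega

end PJS

/-- There is a punctual injection structure, all of whose orbits are finite with
only finitely many orbits of each size, that is computably categorical but not
punctually categorical. -/
theorem pathological_injection_structure :
    ∃ f : ℕ → ℕ, Primrec f ∧ Function.Injective f ∧
      (∀ a : ℕ, (Orbit f a).Finite) ∧
      (∀ n : ℕ, {O : Set ℕ | (∃ a : ℕ, O = Orbit f a) ∧ O.ncard = n}.Finite) ∧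
      (∀ g : ℕ → ℕ, Computable g → Function.Injective g →
        (∃ h : ℕ → ℕ, Function.Bijective h ∧ ∀ n : ℕ, h (f n) = g (h n)) →
        ∃ h : ℕ → ℕ, Computable h ∧ Function.Bijective h ∧
          ∀ n : ℕ, h (f n) = g (h n)) ∧
      (∃ g : ℕ → ℕ, Primrec g ∧ Function.Injective g ∧
        (∃ h : ℕ → ℕ, Function.Bijective h ∧ ∀ n : ℕ, h (f n) = g (h n)) ∧
        ¬∃ h h' : ℕ → ℕ, Function.LeftInverse h' h ∧ Function.RightInverse h' h ∧
          (∀ n : ℕ, h (f n) = g (h n)) ∧ Primrec h ∧ Primrec h') := by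
  refine ⟨PJS.f0, PJS.primrec_f0, PJS.f0_inj, ?_, ?_, ?_, ?_⟩
  · intro a
    rw [PJS.f0_orbit]
    exact Set.finite_Ico _ _
  · intro n
    apply Set.Finite.subset (Set.finite_singleton
      (Set.Ico (PJS.tri (n - 1)) (PJS.tri n)))
    rintro O ⟨⟨a, rfl⟩, hcard⟩
    rw [PJS.f0_orbit_ncard] at hcard
    rw [PJS.f0_orbit]
    simp only [Set.mem_singleton_iff]
    rw [show PJS.inv PJS.tri a + 1 = n from hcard,
      show PJS.inv PJS.tri a = n - 1 by omega]
  · rintro g hg - ⟨e, he, hcomm⟩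
    exact PJS.comp_cat g hg e he hcomm
  · exact ⟨PJS.g0, PJS.primrec_g0, PJS.g0_inj,
      ⟨PJS.Hiso, PJS.Hiso_bij, PJS.Hiso_comm⟩, PJS.no_punctual_iso⟩
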